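/- arXiv:1606.06158 — 3 statements merged into one kernel-verified Lean document; each statement's English description precedes it below -/
import Mathlib

section
/- Let H be a complex Hilbert space and T a bounded linear operator on H. Then T is normaloid (i.e. r(T) = ‖T‖) if and only if ‖T‖ ≤ ‖X T X⁻¹‖ for every bounded invertible operator X on H. -/
open ContinuousLinearMap Filter

variable {H : Type*} [NormedAddCommGroup H] [InnerProductSpace ℂ H] [CompleteSpace H]

/-- The modulus `|S| = (S*S)^(1/2)` of a bounded operator on a Hilbert space. -/
noncomputable def oMod (S : H →L[ℂ] H) : H →L[ℂ] H :=
  CFC.sqrt (ContinuousLinearMap.adjoint S * S)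

/-- Real powers of a (positive) operator, via the continuous functional calculus. -/
noncomputable def oPow (S : H →L[ℂ] H) (r : ℝ) : H →L[ℂ] H :=
  cfc (fun x : ℝ => x ^ r) S

/-- `V` is a partial isometry: it is isometric on the orthogonal complement of its kernel. -/
def IsPartialIsometry (V : H →L[ℂ] H) : Prop :=
  ∀ x ∈ (LinearMap.ker (V : H →ₗ[ℂ] H))ᗮ, ‖V x‖ = ‖x‖

/-- `V` implements the polar decomposition of `S`: it is a partial isometry with
`ker V = ker S` and `S = V * |S|`. -/
def IsPolarDecomp (S V : H →L[ℂ] H) : Prop :=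
  IsPartialIsometry V ∧ LinearMap.ker (V : H →ₗ[ℂ] H) = LinearMap.ker (S : H →ₗ[ℂ] H) ∧ S = V * oMod S

/-- The λ-Aluthge transform `|S|^λ V |S|^(1-λ)` of `S`, computed from a
partial isometry `V` in a polar decomposition `S = V|S|`. -/
noncomputable def aluthge (l : ℝ) (S V : H →L[ℂ] H) : H →L[ℂ] H :=
  oPow (oMod S) l * V * oPow (oMod S) (1 - l)

/-- `S` is a sequence of iterated λ-Aluthge transforms: each `S (m+1)` is the λ-Aluthge
transform of `S m` computed from some polar decomposition of `S m`. -/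
def IsAluthgeSeq (l : ℝ) (S : ℕ → H →L[ℂ] H) : Prop :=
  ∀ m, ∃ V : H →L[ℂ] H, IsPolarDecomp (S m) V ∧ S (m + 1) = aluthge l (S m) V

/-- The numerical radius `w(S) = sup { |⟨Sx, x⟩| : ‖x‖ = 1 }`. -/
noncomputable def numRadius (S : H →L[ℂ] H) : ℝ :=
  sSup {r : ℝ | ∃ x : H, ‖x‖ = 1 ∧ r = ‖(inner ℂ (S x) x : ℂ)‖}

/-- The real part `Re(S) = (S + S*)/2` of a bounded operator. -/
noncomputable def reOp (S : H →L[ℂ] H) : H →L[ℂ] H :=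
  (2 : ℂ)⁻¹ • (S + ContinuousLinearMap.adjoint S)

section NormaloidAux

private lemma sr_ne_top (a : H →L[ℂ] H) : spectralRadius ℂ a ≠ ⊤ := by
  rcases subsingleton_or_nontrivial H with h | h
  · have : Subsingleton (H →L[ℂ] H) := ⟨fun f g => by ext x; exact Subsingleton.elim _ _⟩
    simp [spectrum.SpectralRadius.of_subsingleton]
  · exact ne_top_of_le_ne_top ENNReal.coe_ne_top (spectrum.spectralRadius_le_nnnorm (𝕜 := ℂ) a)

private lemma sr_toReal_le (a : H →L[ℂ] H) : (spectralRadius ℂ a).toReal ≤ ‖a‖ := by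
  rcases subsingleton_or_nontrivial H with h | h
  · have : Subsingleton (H →L[ℂ] H) := ⟨fun f g => by ext x; exact Subsingleton.elim _ _⟩
    simp [spectrum.SpectralRadius.of_subsingleton]
  · have h1 := spectrum.spectralRadius_le_nnnorm (𝕜 := ℂ) a
    have := ENNReal.toReal_mono ENNReal.coe_ne_top h1
    simpa using this

/-- The heart of the Rota-style argument: if `∑ ‖Sⁿ‖²` converges, then `S` is conjugate
(by `X = (∑ (Sⁿ)* Sⁿ)^(1/2)`) to a contraction. -/
private lemma inner_self_complex (v : H) : (inner ℂ v v : ℂ) = ((‖v‖ ^ 2 : ℝ) : ℂ) := by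
  rw [inner_self_eq_norm_sq_to_K]; norm_num

private lemma exists_unit_conj_norm_le_one (S : H →L[ℂ] H)
    (hsum : Summable fun n : ℕ => ‖S ^ n‖ ^ 2) :
    ∃ X : (H →L[ℂ] H)ˣ, ‖(X : H →L[ℂ] H) * S * (↑X⁻¹ : H →L[ℂ] H)‖ ≤ 1 := by
  -- the operator `A = ∑ (Sⁿ)* Sⁿ`
  have hsum' : Summable fun n : ℕ => ContinuousLinearMap.adjoint (S ^ n) * S ^ n := by
    refine Summable.of_norm_bounded hsum fun n => ?_
    calc ‖ContinuousLinearMap.adjoint (S ^ n) * S ^ n‖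
        ≤ ‖ContinuousLinearMap.adjoint (S ^ n)‖ * ‖S ^ n‖ := norm_mul_le _ _
      _ = ‖S ^ n‖ ^ 2 := by rw [← star_eq_adjoint, norm_star]; ring
  set A : H →L[ℂ] H := ∑' n : ℕ, ContinuousLinearMap.adjoint (S ^ n) * S ^ n with hAdef
  -- pointwise quadratic form of `A`
  have hAz : ∀ z : H, HasSum (fun n : ℕ => ((‖(S ^ n) z‖ : ℂ) ^ 2)) (inner ℂ z (A z)) := by
    intro z
    have h := hsum'.hasSum.mapL ((innerSL ℂ z).comp (ContinuousLinearMap.apply ℂ H z))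
    convert h using 2 with n
    · rfl
    simp only [ContinuousLinearMap.comp_apply, ContinuousLinearMap.apply_apply,
      innerSL_apply_apply, mul_apply_eq_comp, adjoint_inner_right, inner_self_complex]
    norm_cast
    rfl
  have hsq : ∀ z : H, Summable fun n : ℕ => ‖(S ^ n) z‖ ^ 2 := by
    intro z
    refine Summable.of_nonneg_of_le (fun n => by positivity) (fun n => ?_)
      (hsum.mul_right (‖z‖ ^ 2))
    calc ‖(S ^ n) z‖ ^ 2 ≤ (‖S ^ n‖ * ‖z‖) ^ 2 := by
          have := (S ^ n).le_opNorm z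
          have h0 : (0:ℝ) ≤ ‖(S ^ n) z‖ := norm_nonneg _
          nlinarith
      _ = ‖S ^ n‖ ^ 2 * ‖z‖ ^ 2 := by ring
  set t : H → ℝ := fun z => ∑' n : ℕ, ‖(S ^ n) z‖ ^ 2 with htdef
  have hts : ∀ z : H, HasSum (fun n : ℕ => ‖(S ^ n) z‖ ^ 2) (t z) := fun z => (hsq z).hasSum
  have hinner : ∀ z : H, (inner ℂ z (A z) : ℂ) = (t z : ℂ) := by
    intro z
    have h := (hts z).mapL Complex.ofRealCLM
    simp only [Complex.ofRealCLM_apply, Complex.ofReal_pow] at h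
    exact (hAz z).unique h
  have hinner' : ∀ z : H, (inner ℂ (A z) z : ℂ) = (t z : ℂ) := by
    intro z
    rw [← inner_conj_symm, hinner]
    simp
  -- lower bound `‖z‖² ≤ t z`
  have ht_ge : ∀ z : H, ‖z‖ ^ 2 ≤ t z := by
    intro z
    have h := Summable.le_tsum (hsq z) 0 fun j _ => by positivity
    simpa [htdef] using h
  -- `A` is selfadjoint
  have hsa : IsSelfAdjoint A := by
    have hterm : ∀ B : H →L[ℂ] H,
        star (ContinuousLinearMap.adjoint B * B) = ContinuousLinearMap.adjoint B * B := by
      intro B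
      rw [star_mul, star_eq_adjoint, star_eq_adjoint, adjoint_adjoint]
    have h2 : HasSum (fun n : ℕ => ContinuousLinearMap.adjoint (S ^ n) * S ^ n) (star A) := by
      have := hsum'.hasSum.star
      simpa only [hterm] using this
    exact h2.unique hsum'.hasSum
  -- `1 ≤ A`
  have h1A : (1 : H →L[ℂ] H) ≤ A := by
    rw [ContinuousLinearMap.le_def]
    refine ⟨ContinuousLinearMap.isSelfAdjoint_iff_isSymmetric.mp (hsa.sub ((IsSelfAdjoint.one _))), fun x => ?_⟩
    rw [ContinuousLinearMap.reApplyInnerSelf_apply]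
    have hsub : ((A - 1) x : H) = A x - x := by
      rw [ContinuousLinearMap.sub_apply, ContinuousLinearMap.one_apply]
    rw [hsub, inner_sub_left, hinner', inner_self_complex, ← Complex.ofReal_sub]
    have hre : RCLike.re ((↑(t x - ‖x‖ ^ 2) : ℂ)) = t x - ‖x‖ ^ 2 := Complex.ofReal_re _
    rw [hre]
    linarith [ht_ge x]
  have h0A : (0 : H →L[ℂ] H) ≤ A := zero_le_one.trans h1A
  -- `X = √A`
  set X : H →L[ℂ] H := CFC.sqrt A with hXdef
  have hXsa : IsSelfAdjoint X := IsSelfAdjoint.of_nonneg (CFC.sqrt_nonneg A)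
  have hXX : X * X = A := by
    rw [← pow_two]
    exact CFC.sq_sqrt A h0A
  -- `‖X z‖² = t z`
  have hXnorm : ∀ z : H, ‖X z‖ ^ 2 = t z := by
    intro z
    have h1 : (inner ℂ (X z) (X z) : ℂ) = inner ℂ z (A z) := by
      rw [← adjoint_inner_right, hXsa.adjoint_eq, ← mul_apply_eq_comp, hXX]
    rw [hinner z, inner_self_complex (X z)] at h1
    exact_mod_cast h1
  -- `X` is invertible
  have hAunit : IsUnit A := CStarAlgebra.isUnit_of_le 1 h1A
  have hXunit : IsUnit X := by
    obtain ⟨u, hu⟩ := hAunit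
    have hcommA : Commute X A := by
      rw [← hXX]
      exact Commute.mul_right rfl rfl
    have hcomm : Commute X (↑u : H →L[ℂ] H) := by rw [hu]; exact hcommA
    have hcomm' := hcomm.units_inv_right
    refine isUnit_iff_exists.mpr ⟨(↑u⁻¹ : H →L[ℂ] H) * X, ?_, ?_⟩
    · rw [← mul_assoc, hcomm'.eq, mul_assoc, hXX, ← hu, Units.inv_mul]
    · rw [mul_assoc, hXX, ← hu, Units.inv_mul]
  obtain ⟨U, hU⟩ := hXunit
  refine ⟨U, ?_⟩
  refine opNorm_le_bound _ zero_le_one fun y => ?_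
  rw [one_mul]
  obtain ⟨x, hx⟩ : ∃ x : H, (↑U⁻¹ : H →L[ℂ] H) y = x := ⟨_, rfl⟩
  have hXx : X x = y := by
    rw [← hx, ← hU, ← mul_apply_eq_comp, ← Units.val_mul, mul_inv_cancel, Units.val_one, one_apply_eq_self]
  have happ : ((↑U : H →L[ℂ] H) * S * (↑U⁻¹ : H →L[ℂ] H)) y = X (S x) := by
    rw [mul_apply_eq_comp, mul_apply_eq_comp, hx, hU]
  rw [happ, ← hXx]
  -- `t (S x) ≤ t x`
  have hkey : t (S x) ≤ t x := by
    refine Summable.tsum_le_tsum_of_inj Nat.succ Nat.succ_injective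
      (fun c _ => by positivity) (fun i => le_of_eq ?_) (hsq (S x)) (hsq x)
    simp [pow_succ, mul_apply]
  have hsq_le : ‖X (S x)‖ ^ 2 ≤ ‖X x‖ ^ 2 := by
    rw [hXnorm, hXnorm]; exact hkey
  nlinarith [norm_nonneg (X (S x)), norm_nonneg (X x)]

end NormaloidAux

/-- `T` is normaloid iff `‖T‖ ≤ ‖X T X⁻¹‖` for every invertible `X`. -/
theorem normaloid_iff_norm_le_norm_conj (T : H →L[ℂ] H) :
    (spectralRadius ℂ T).toReal = ‖T‖ ↔
      ∀ X : (H →L[ℂ] H)ˣ,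
        ‖T‖ ≤ ‖(X : H →L[ℂ] H) * T * (↑X⁻¹ : H →L[ℂ] H)‖ := by
  constructor
  · -- easy direction: spectral radius is invariant under conjugation
    intro h X
    have hspec : spectralRadius ℂ ((X : H →L[ℂ] H) * T * (↑X⁻¹ : H →L[ℂ] H))
        = spectralRadius ℂ T := by
      unfold spectralRadius
      rw [spectrum.units_conjugate]
    calc ‖T‖ = (spectralRadius ℂ ((X : H →L[ℂ] H) * T * (↑X⁻¹ : H →L[ℂ] H))).toReal := by
          rw [hspec, h]
      _ ≤ ‖(X : H →L[ℂ] H) * T * (↑X⁻¹ : H →L[ℂ] H)‖ := sr_toReal_le _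
  · -- hard direction
    intro hyp
    by_contra hne
    have hle : (spectralRadius ℂ T).toReal ≤ ‖T‖ := sr_toReal_le T
    have hlt : (spectralRadius ℂ T).toReal < ‖T‖ := lt_of_le_of_ne hle hne
    set r : ℝ := (spectralRadius ℂ T).toReal with hrdef
    have hr0 : 0 ≤ r := ENNReal.toReal_nonneg
    have hTpos : 0 < ‖T‖ := lt_of_le_of_lt hr0 hlt
    obtain ⟨q, hrq, hqT⟩ : ∃ q, r < q ∧ q < ‖T‖ := ⟨(r + ‖T‖) / 2, by linarith, by linarith⟩
    obtain ⟨ρ, hqρ, hρT⟩ : ∃ ρ, q < ρ ∧ ρ < ‖T‖ := ⟨(q + ‖T‖) / 2, by linarith, by linarith⟩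
    have hq0 : 0 < q := lt_of_le_of_lt hr0 hrq
    have hρ0 : 0 < ρ := hq0.trans hqρ
    -- Gelfand: eventually `‖Tⁿ‖ ≤ qⁿ`
    have htend := spectrum.pow_nnnorm_pow_one_div_tendsto_nhds_spectralRadius T
    have hlt' : spectralRadius ℂ T < ENNReal.ofReal q :=
      (ENNReal.lt_ofReal_iff_toReal_lt (sr_ne_top T)).mpr hrq
    have hev : ∀ᶠ n : ℕ in atTop, (‖T ^ n‖₊ : ENNReal) ^ (1 / (n : ℝ)) < ENNReal.ofReal q :=
      htend.eventually_lt_const hlt'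
    have hTn : ∀ᶠ n : ℕ in atTop, ‖T ^ n‖ ≤ q ^ n := by
      filter_upwards [hev, eventually_ge_atTop 1] with n hn hn1
      have hn0 : (n : ℝ) ≠ 0 := Nat.cast_ne_zero.mpr (by omega)
      have h2 : ((‖T ^ n‖₊ : ENNReal) ^ (1 / (n : ℝ))) ^ (n : ℝ)
          ≤ (ENNReal.ofReal q) ^ (n : ℝ) :=
        ENNReal.rpow_le_rpow hn.le (Nat.cast_nonneg n)
      rw [← ENNReal.rpow_mul, one_div, inv_mul_cancel₀ hn0, ENNReal.rpow_one,
        ENNReal.rpow_natCast, ← ENNReal.ofReal_pow hq0.le, ← ENNReal.ofReal_coe_nnreal, coe_nnnorm] at h2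
      exact (ENNReal.ofReal_le_ofReal_iff (by positivity)).mp h2
    -- the rescaled operator `S = ρ⁻¹ • T`
    set S : H →L[ℂ] H := ((ρ⁻¹ : ℝ) : ℂ) • T with hSdef
    have hSn : ∀ n : ℕ, ‖S ^ n‖ = ρ⁻¹ ^ n * ‖T ^ n‖ := by
      intro n
      rw [hSdef, smul_pow, norm_smul, norm_pow, Complex.norm_real,
        Real.norm_eq_abs, abs_of_pos (by positivity)]
    have hsum : Summable fun n : ℕ => ‖S ^ n‖ ^ 2 := by
      refine Summable.of_norm_bounded_eventually_nat (g := fun n => ((q / ρ) ^ 2) ^ n) ?_ ?_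
      · exact summable_geometric_of_lt_one (by positivity)
          (by
            have h1 : q / ρ < 1 := (div_lt_one hρ0).mpr hqρ
            have h2 : 0 ≤ q / ρ := by positivity
            nlinarith)
      · filter_upwards [hTn] with n hn
        rw [Real.norm_of_nonneg (by positivity)]
        have hb : ‖S ^ n‖ ≤ (q / ρ) ^ n := by
          have hqn : (q / ρ) ^ n = ρ⁻¹ ^ n * q ^ n := by
            rw [div_eq_mul_inv, mul_pow, mul_comm]
          rw [hSn n, hqn]
          exact mul_le_mul_of_nonneg_left hn (by positivity)
        calc ‖S ^ n‖ ^ 2 ≤ ((q / ρ) ^ n) ^ 2 :=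
              pow_le_pow_left₀ (norm_nonneg _) hb 2
          _ = ((q / ρ) ^ 2) ^ n := by ring
    obtain ⟨X, hX⟩ := exists_unit_conj_norm_le_one S hsum
    have hT : T = ((ρ : ℝ) : ℂ) • S := by
      rw [hSdef, smul_smul, ← Complex.ofReal_mul, mul_inv_cancel₀ hρ0.ne']
      simp
    have hconj : (X : H →L[ℂ] H) * T * (↑X⁻¹ : H →L[ℂ] H)
        = ((ρ : ℝ) : ℂ) • ((X : H →L[ℂ] H) * S * (↑X⁻¹ : H →L[ℂ] H)) := by
      rw [hT]
      simp [mul_smul_comm, smul_mul_assoc]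
    have hbound : ‖(X : H →L[ℂ] H) * T * (↑X⁻¹ : H →L[ℂ] H)‖ ≤ ρ := by
      rw [hconj, norm_smul, Complex.norm_real, Real.norm_eq_abs, abs_of_pos hρ0]
      calc ρ * ‖(X : H →L[ℂ] H) * S * (↑X⁻¹ : H →L[ℂ] H)‖ ≤ ρ * 1 :=
            mul_le_mul_of_nonneg_left hX hρ0.le
        _ = ρ := mul_one ρ
    have := hyp X
    linarith
end

section
/- Let H be a complex Hilbert space, T a bounded linear operator on H, and λ ∈ (0,1). Then r(T) = inf { w(Δ_λ(X T X⁻¹)) : X a bounded invertible operator on H }, where w(S) = sup { |⟨S x, x⟩| : x ∈ H, ‖x‖ = 1 } is the numerical radius, and Δ_λ(X T X⁻¹) denotes |S|^λ V |S|^{1-λ} with S = X T X⁻¹ and V any partial isometry satisfying ker V = ker S and S = V|S|. -/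
open ContinuousLinearMap Filter

variable {H : Type*} [NormedAddCommGroup H] [InnerProductSpace ℂ H] [CompleteSpace H]

set_option maxHeartbeats 1000000
set_option synthInstance.maxHeartbeats 200000
set_option linter.unusedSectionVars false

local notation "⟪" x ", " y "⟫" => @inner ℂ _ _ x y




lemma oMod_nonneg (S : H →L[ℂ] H) : 0 ≤ oMod S := CFC.sqrt_nonneg _

lemma oMod_isSelfAdjoint (S : H →L[ℂ] H) : IsSelfAdjoint (oMod S) :=
  (oMod_nonneg S).isSelfAdjoint

lemma oMod_mul_self (S : H →L[ℂ] H) :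
    oMod S * oMod S = ContinuousLinearMap.adjoint S * S := by
  have h : (0 : H →L[ℂ] H) ≤ ContinuousLinearMap.adjoint S * S := by
    simpa [ContinuousLinearMap.star_eq_adjoint] using star_mul_self_nonneg S
  exact CFC.sqrt_mul_sqrt_self _ h

lemma norm_oMod_apply (S : H →L[ℂ] H) (x : H) : ‖oMod S x‖ = ‖S x‖ := by
  have h1 : ⟪oMod S x, oMod S x⟫ = ⟪S x, S x⟫ := by
    rw [← ContinuousLinearMap.adjoint_inner_right (oMod S) x (oMod S x),
      (oMod_isSelfAdjoint S).adjoint_eq,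
      ← ContinuousLinearMap.mul_apply, oMod_mul_self,
      ContinuousLinearMap.mul_apply,
      ContinuousLinearMap.adjoint_inner_right S x (S x)]
  have h2 := congrArg (RCLike.re (K := ℂ)) h1
  rw [inner_self_eq_norm_mul_norm (𝕜 := ℂ), inner_self_eq_norm_mul_norm (𝕜 := ℂ)] at h2
  nlinarith [norm_nonneg (oMod S x), norm_nonneg (S x)]

lemma ker_oMod (S : H →L[ℂ] H) : LinearMap.ker (oMod S : H →ₗ[ℂ] H) = LinearMap.ker (S : H →ₗ[ℂ] H) := by
  ext x
  simp only [LinearMap.mem_ker, ContinuousLinearMap.coe_coe]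
  rw [← norm_eq_zero (a := oMod S x), ← norm_eq_zero (a := S x), norm_oMod_apply]


lemma numRadius_nonneg (S : H →L[ℂ] H) : 0 ≤ numRadius S :=
  Real.sSup_nonneg (by rintro r ⟨x, hx, rfl⟩; positivity)

lemma numRadius_bddAbove (S : H →L[ℂ] H) :
    BddAbove {r : ℝ | ∃ x : H, ‖x‖ = 1 ∧ r = ‖(inner ℂ (S x) x : ℂ)‖} := by
  refine ⟨‖S‖, ?_⟩
  rintro r ⟨x, hx, rfl⟩
  calc ‖(inner ℂ (S x) x : ℂ)‖ ≤ ‖S x‖ * ‖x‖ := norm_inner_le_norm _ _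
    _ ≤ ‖S‖ * ‖x‖ * ‖x‖ := by
        have := S.le_opNorm x
        nlinarith [norm_nonneg x, norm_nonneg (S x), norm_nonneg S]
    _ = ‖S‖ := by rw [hx]; ring

lemma numRadius_le_norm (S : H →L[ℂ] H) : numRadius S ≤ ‖S‖ := by
  refine Real.sSup_le ?_ (norm_nonneg S)
  rintro r ⟨x, hx, rfl⟩
  calc ‖(inner ℂ (S x) x : ℂ)‖ ≤ ‖S x‖ * ‖x‖ := norm_inner_le_norm _ _
    _ ≤ ‖S‖ * ‖x‖ * ‖x‖ := by
        have := S.le_opNorm x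
        nlinarith [norm_nonneg x, norm_nonneg (S x), norm_nonneg S]
    _ = ‖S‖ := by rw [hx]; ring

lemma norm_inner_le_numRadius (S : H →L[ℂ] H) (x : H) :
    ‖(inner ℂ (S x) x : ℂ)‖ ≤ numRadius S * ‖x‖ ^ 2 := by
  rcases eq_or_ne x 0 with rfl | hx
  · simp
  · have hn : (0 : ℝ) < ‖x‖ := norm_pos_iff.mpr hx
    set u : H := ((‖x‖ : ℂ))⁻¹ • x with hu
    have hu1 : ‖u‖ = 1 := by
      rw [hu, norm_smul]; simp [inv_mul_cancel₀ hn.ne']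
    have hmem : ‖(inner ℂ (S u) u : ℂ)‖ ≤ numRadius S :=
      le_csSup (numRadius_bddAbove S) ⟨u, hu1, rfl⟩
    have hval : ‖(inner ℂ (S u) u : ℂ)‖ = ‖x‖⁻¹ * ‖x‖⁻¹ * ‖(inner ℂ (S x) x : ℂ)‖ := by
      rw [hu, map_smul, inner_smul_left, inner_smul_right, norm_mul, norm_mul]
      simp only [map_inv₀, norm_inv, RCLike.norm_conj]
      simp [Complex.norm_real]
      ring
    rw [hval] at hmem
    have h2 : ‖(inner ℂ (S x) x : ℂ)‖ = ‖x‖ ^ 2 * (‖x‖⁻¹ * ‖x‖⁻¹ * ‖(inner ℂ (S x) x : ℂ)‖) := by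
      field_simp
    rw [h2]
    calc ‖x‖ ^ 2 * (‖x‖⁻¹ * ‖x‖⁻¹ * ‖(inner ℂ (S x) x : ℂ)‖) ≤ ‖x‖ ^ 2 * numRadius S := by
          apply mul_le_mul_of_nonneg_left hmem (by positivity)
      _ = numRadius S * ‖x‖ ^ 2 := by ring

lemma norm_le_numRadius_of_mem_spectrum {S : H →L[ℂ] H} {z : ℂ}
    (hz : z ∈ spectrum ℂ S) : ‖z‖ ≤ numRadius S := by
  by_contra h
  push_neg at h
  set c : ℝ := ‖z‖ - numRadius S with hc
  have hcpos : 0 < c := sub_pos.mpr h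
  have hunit : IsUnit (algebraMap ℂ (H →L[ℂ] H) z - S) := by
    refine ContinuousLinearMap.isUnit_of_forall_le_norm_inner_map _
      (c := ⟨c, hcpos.le⟩) (by exact_mod_cast hcpos) fun x => ?_
    have happ : (algebraMap ℂ (H →L[ℂ] H) z - S) x = z • x - S x := by
      simp [Algebra.algebraMap_eq_smul_one]
    have hinner : (inner ℂ ((algebraMap ℂ (H →L[ℂ] H) z - S) x) x : ℂ)
        = starRingEnd ℂ z * (‖x‖ : ℂ) ^ 2 - inner ℂ (S x) x := by
      rw [happ, inner_sub_left, inner_smul_left, inner_self_eq_norm_sq_to_K]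
      norm_num
    rw [hinner]
    have h1 : ‖starRingEnd ℂ z * (‖x‖ : ℂ) ^ 2‖ = ‖z‖ * ‖x‖ ^ 2 := by
      simp [norm_mul]
    calc ‖x‖ ^ 2 * (⟨c, hcpos.le⟩ : NNReal) = ‖z‖ * ‖x‖ ^ 2 - numRadius S * ‖x‖ ^ 2 := by
          simp only [NNReal.coe_mk]; ring
      _ ≤ ‖starRingEnd ℂ z * (‖x‖ : ℂ) ^ 2‖ - ‖(inner ℂ (S x) x : ℂ)‖ := by
          have := norm_inner_le_numRadius S x
          rw [h1]; linarith
      _ ≤ ‖starRingEnd ℂ z * (‖x‖ : ℂ) ^ 2 - inner ℂ (S x) x‖ := by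
          exact norm_sub_norm_le _ _
  exact (spectrum.mem_iff.mp hz) hunit

lemma toReal_spectralRadius_le_numRadius (S : H →L[ℂ] H) :
    (spectralRadius ℂ S).toReal ≤ numRadius S := by
  refine ENNReal.toReal_le_of_le_ofReal (numRadius_nonneg S) ?_
  rw [spectralRadius]
  refine iSup₂_le fun z hz => ?_
  rw [← ENNReal.ofReal_coe_nnreal, coe_nnnorm]
  exact ENNReal.ofReal_le_ofReal (norm_le_numRadius_of_mem_spectrum hz)


lemma spectralRadius_mul_comm' {A : Type*} [NormedRing A] [NormedAlgebra ℂ A] (a b : A) :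
    spectralRadius ℂ (a * b) = spectralRadius ℂ (b * a) := by
  have key : ∀ c d : A, spectralRadius ℂ (c * d) ≤ spectralRadius ℂ (d * c) := by
    intro c d
    rw [spectralRadius, spectralRadius]
    refine iSup₂_le fun z hz => ?_
    rcases eq_or_ne z 0 with rfl | hz0
    · simp
    · have hmem : z ∈ spectrum ℂ (d * c) \ {0} := by
        rw [← spectrum.nonzero_mul_comm]
        exact ⟨hz, hz0⟩
      exact le_iSup₂ (f := fun z (_ : z ∈ spectrum ℂ (d * c)) => (‖z‖₊ : ENNReal)) z hmem.1
  exact le_antisymm (key a b) (key b a)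

lemma spectrum_conj {A : Type*} [NormedRing A] [NormedAlgebra ℂ A] (X : Aˣ) (T : A) :
    spectrum ℂ ((X : A) * T * (↑X⁻¹ : A)) = spectrum ℂ T := by
  ext z
  simp only [spectrum.mem_iff, not_iff_not]
  have key : algebraMap ℂ A z - (X : A) * T * (↑X⁻¹ : A)
      = (X : A) * (algebraMap ℂ A z - T) * (↑X⁻¹ : A) := by
    rw [mul_sub, sub_mul]
    congr 1
    rw [← Algebra.commutes z (X : A), mul_assoc, Units.mul_inv, mul_one]
  rw [key]
  constructor
  · intro h
    have := (X⁻¹.isUnit.mul h).mul X.isUnit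
    have heq : (↑X⁻¹ : A) * ((X : A) * (algebraMap ℂ A z - T) * (↑X⁻¹ : A)) * (X : A)
        = algebraMap ℂ A z - T := by
      calc (↑X⁻¹ : A) * ((X : A) * (algebraMap ℂ A z - T) * (↑X⁻¹ : A)) * (X : A)
          = ((↑X⁻¹ : A) * (X : A)) * (algebraMap ℂ A z - T) * ((↑X⁻¹ : A) * (X : A)) := by
            noncomm_ring
        _ = algebraMap ℂ A z - T := by rw [Units.inv_mul]; simp
    rwa [heq] at this
  · intro h
    exact (X.isUnit.mul h).mul X⁻¹.isUnit

lemma oPow_mul_oPow (S : H →L[ℂ] H) {l : ℝ} (hl : l ∈ Set.Ioo (0 : ℝ) 1) :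
    oPow (oMod S) (1 - l) * oPow (oMod S) l = oMod S := by
  obtain ⟨hl0, hl1⟩ := hl
  have hcont1 : ContinuousOn (fun x : ℝ => x ^ (1 - l)) (spectrum ℝ (oMod S)) := fun x _ =>
    (Real.continuousAt_rpow_const x _ (Or.inr (by linarith))).continuousWithinAt
  have hcont2 : ContinuousOn (fun x : ℝ => x ^ l) (spectrum ℝ (oMod S)) := fun x _ =>
    (Real.continuousAt_rpow_const x _ (Or.inr (by linarith))).continuousWithinAt
  rw [oPow, oPow, ← cfc_mul _ _ _ hcont1 hcont2]
  have heq : cfc (fun x : ℝ => x ^ (1 - l) * x ^ l) (oMod S)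
      = cfc (fun x : ℝ => x) (oMod S) := by
    apply cfc_congr
    intro x hx
    have hx0 : 0 ≤ x := spectrum_nonneg_of_nonneg (oMod_nonneg S) hx
    simp only
    rw [← Real.rpow_add' hx0 (by norm_num), sub_add_cancel, Real.rpow_one]
  rw [heq, cfc_id' ℝ (oMod S) (oMod_isSelfAdjoint S)]

lemma spectralRadius_aluthge {S V : H →L[ℂ] H} (hPD : IsPolarDecomp S V) {l : ℝ}
    (hl : l ∈ Set.Ioo (0 : ℝ) 1) :
    spectralRadius ℂ (aluthge l S V) = spectralRadius ℂ S := by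
  rw [aluthge, mul_assoc, spectralRadius_mul_comm']
  rw [mul_assoc, oPow_mul_oPow S hl, ← hPD.2.2]


lemma norm_oMod (S : H →L[ℂ] H) : ‖oMod S‖ = ‖S‖ := by
  have h1 : ‖oMod S‖ * ‖oMod S‖ = ‖S‖ * ‖S‖ := by
    calc ‖oMod S‖ * ‖oMod S‖ = ‖star (oMod S) * oMod S‖ := (CStarRing.norm_star_mul_self).symm
      _ = ‖oMod S * oMod S‖ := by rw [(oMod_isSelfAdjoint S).star_eq]
      _ = ‖star S * S‖ := by rw [oMod_mul_self, ContinuousLinearMap.star_eq_adjoint]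
      _ = ‖S‖ * ‖S‖ := CStarRing.norm_star_mul_self
  nlinarith [norm_nonneg (oMod S), norm_nonneg S]

lemma spectrum_le_norm {P : H →L[ℂ] H} {x : ℝ} (hx : x ∈ spectrum ℝ P) : x ≤ ‖P‖ := by
  rcases subsingleton_or_nontrivial H with hsub | hnt
  · haveI : Subsingleton (H →L[ℂ] H) :=
      ⟨fun f g => ContinuousLinearMap.ext fun y => Subsingleton.elim _ _⟩
    exact absurd hx (by simp [spectrum.mem_iff, isUnit_of_subsingleton])
  · calc x ≤ ‖x‖ := le_abs_self x
      _ ≤ ‖P‖ := spectrum.norm_le_norm_of_mem hx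

lemma norm_oPow_le (S : H →L[ℂ] H) {r : ℝ} (hr : 0 < r) :
    ‖oPow (oMod S) r‖ ≤ ‖S‖ ^ r := by
  rw [← norm_oMod S]
  refine norm_cfc_le (Real.rpow_nonneg (norm_nonneg _) r) fun x hx => ?_
  have hx0 : 0 ≤ x := spectrum_nonneg_of_nonneg (oMod_nonneg S) hx
  rw [Real.norm_eq_abs, abs_of_nonneg (Real.rpow_nonneg hx0 r)]
  exact Real.rpow_le_rpow hx0 (spectrum_le_norm hx) hr.le

lemma IsPolarDecomp.norm_apply_le {S V : H →L[ℂ] H} (h : IsPolarDecomp S V) (x : H) :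
    ‖V x‖ ≤ ‖x‖ := by
  set K : Submodule ℂ H := LinearMap.ker (V : H →ₗ[ℂ] H) with hK
  haveI : CompleteSpace K := (ContinuousLinearMap.isClosed_ker V).completeSpace_coe
  set p : H := (K.orthogonalProjectionOnto x : H) with hp'
  have hp : p ∈ K := (K.orthogonalProjectionOnto x).2
  have hq : x - p ∈ Kᗮ := Submodule.sub_starProjection_mem_orthogonal (K := K) x
  have hVp : V p = 0 := LinearMap.mem_ker.mp hp
  have hVx : V x = V (x - p) := by rw [map_sub, hVp, sub_zero]
  have hnorm : ‖V (x - p)‖ = ‖x - p‖ := h.1 _ hq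
  have hinner : (inner ℂ p (x - p) : ℂ) = 0 :=
    Submodule.inner_right_of_mem_orthogonal hp hq
  have hpyth : ‖x‖ ^ 2 = ‖p‖ ^ 2 + ‖x - p‖ ^ 2 := by
    have hx : x = p + (x - p) := by abel
    calc ‖x‖ ^ 2 = ‖p + (x - p)‖ ^ 2 := by rw [← hx]
      _ = ‖p‖ ^ 2 + 2 * RCLike.re (inner ℂ p (x - p) : ℂ) + ‖x - p‖ ^ 2 :=
          norm_add_sq (𝕜 := ℂ) _ _
      _ = ‖p‖ ^ 2 + ‖x - p‖ ^ 2 := by rw [hinner]; simp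
  have h2 : ‖x - p‖ ≤ ‖x‖ := by nlinarith [norm_nonneg (x - p), norm_nonneg x, sq_nonneg ‖p‖]
  rw [hVx, hnorm]
  exact h2

lemma numRadius_aluthge_le_norm {S V : H →L[ℂ] H} (hPD : IsPolarDecomp S V) {l : ℝ}
    (hl : l ∈ Set.Ioo (0 : ℝ) 1) : numRadius (aluthge l S V) ≤ ‖S‖ := by
  obtain ⟨hl0, hl1⟩ := hl
  refine (numRadius_le_norm _).trans ?_
  have hV : ‖V‖ ≤ 1 :=
    ContinuousLinearMap.opNorm_le_bound V zero_le_one fun x => by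
      simpa using hPD.norm_apply_le x
  have h1 : ‖oPow (oMod S) l‖ ≤ ‖S‖ ^ l := norm_oPow_le S hl0
  have h2 : ‖oPow (oMod S) (1 - l)‖ ≤ ‖S‖ ^ (1 - l) := norm_oPow_le S (by linarith)
  have hSnn : (0:ℝ) ≤ ‖S‖ := norm_nonneg S
  calc ‖aluthge l S V‖ ≤ ‖oPow (oMod S) l * V‖ * ‖oPow (oMod S) (1 - l)‖ := norm_mul_le _ _
    _ ≤ (‖oPow (oMod S) l‖ * ‖V‖) * ‖oPow (oMod S) (1 - l)‖ :=
        mul_le_mul_of_nonneg_right (norm_mul_le _ _) (norm_nonneg _)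
    _ ≤ (‖S‖ ^ l * 1) * ‖S‖ ^ (1 - l) := by
        have hh : ‖oPow (oMod S) l‖ * ‖V‖ ≤ ‖S‖ ^ l * 1 :=
          mul_le_mul h1 hV (norm_nonneg _) (Real.rpow_nonneg hSnn _)
        exact mul_le_mul hh h2 (norm_nonneg _)
          (by positivity)
    _ = ‖S‖ := by
        rw [mul_one, ← Real.rpow_add' hSnn (by norm_num), add_sub_cancel, Real.rpow_one]


theorem exists_polarDecomp (S : H →L[ℂ] H) : ∃ V : H →L[ℂ] H, IsPolarDecomp S V := by
  classical
  set fL : H →ₗ[ℂ] H := (oMod S : H →ₗ[ℂ] H) with hfL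
  set M : Submodule ℂ H := LinearMap.range fL with hM
  set N : Submodule ℂ H := M.topologicalClosure with hN
  haveI : CompleteSpace N := (Submodule.isClosed_topologicalClosure M).completeSpace_coe
  have hfL_apply : ∀ x : H, fL x = oMod S x := fun x => rfl
  have hker : LinearMap.ker fL ≤ LinearMap.ker (S : H →ₗ[ℂ] H) := by
    intro x hx
    have h1 : oMod S x = 0 := hx
    have h2 : ‖S x‖ = 0 := by rw [← norm_oMod_apply, h1, norm_zero]
    exact norm_eq_zero.mp h2
  set φ₀ : M →ₗ[ℂ] H :=
    ((LinearMap.ker fL).liftQ (S : H →ₗ[ℂ] H) hker).comp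
      (fL.quotKerEquivRange.symm : M →ₗ[ℂ] H ⧸ LinearMap.ker fL) with hφ₀
  have hφ₀_apply : ∀ x : H, φ₀ ⟨fL x, LinearMap.mem_range_self fL x⟩ = S x := by
    intro x
    have h1 : fL.quotKerEquivRange.symm ⟨fL x, LinearMap.mem_range_self fL x⟩
        = Submodule.Quotient.mk x := by
      rw [LinearEquiv.symm_apply_eq]
      exact Subtype.ext (LinearMap.quotKerEquivRange_apply_mk fL x).symm
    rw [hφ₀, LinearMap.comp_apply]
    erw [h1]
    rw [Submodule.liftQ_apply]
    rfl
  have hφ₀_norm : ∀ m : M, ‖φ₀ m‖ = ‖(m : H)‖ := by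
    intro m
    obtain ⟨x, hx⟩ := m.2
    have hm : m = ⟨fL x, LinearMap.mem_range_self fL x⟩ := Subtype.ext hx.symm
    rw [hm, hφ₀_apply]
    show ‖S x‖ = ‖fL x‖
    rw [hfL_apply, norm_oMod_apply]
  set φ : M →L[ℂ] H := φ₀.mkContinuous 1 (fun m => by rw [hφ₀_norm, one_mul]; rfl) with hφ
  have hφ_apply : ∀ m : M, φ m = φ₀ m := fun m => rfl
  have hMN : M ≤ N := Submodule.le_topologicalClosure M
  set jlin : M →ₗ[ℂ] N := Submodule.inclusion hMN with hjlin
  set j : M →L[ℂ] N := jlin.mkContinuous 1 (fun m => by simp [hjlin]) with hj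
  have hj_apply : ∀ m : M, (j m : H) = (m : H) := fun m => rfl
  have h_iso : Isometry j := AddMonoidHomClass.isometry_of_norm j (fun m => rfl)
  have h_e : IsUniformInducing j := h_iso.isUniformInducing
  have h_dense : DenseRange j := by
    intro n
    rw [Metric.mem_closure_iff]
    intro ε hε
    have hn : (n : H) ∈ closure (M : Set H) := by
      rw [← Submodule.topologicalClosure_coe]
      exact n.2
    rw [Metric.mem_closure_iff] at hn
    obtain ⟨m, hm, hdist⟩ := hn ε hε
    refine ⟨j ⟨m, hm⟩, ⟨⟨m, hm⟩, rfl⟩, ?_⟩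
    rw [Subtype.dist_eq]
    exact hdist
  set V₁ : N →L[ℂ] H := φ.extend j with hV₁
  have hV₁_eq : ∀ m : M, V₁ (j m) = φ m := fun m =>
    ContinuousLinearMap.extend_eq φ h_dense h_e m
  have hV₁_norm : ∀ n : N, ‖V₁ n‖ = ‖(n : H)‖ := by
    have hfun : (fun n : N => ‖V₁ n‖) = fun n : N => ‖(n : H)‖ := by
      refine Continuous.ext_on h_dense (by fun_prop) (by fun_prop) ?_
      rintro - ⟨m, rfl⟩
      show ‖V₁ (j m)‖ = ‖((j m : N) : H)‖
      rw [hV₁_eq, hj_apply, hφ_apply, hφ₀_norm]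
    exact fun n => congrFun hfun n
  set V : H →L[ℂ] H := V₁.comp (N.orthogonalProjectionOnto) with hV
  have hVmem : ∀ (x : H) (hx : x ∈ N), V x = V₁ ⟨x, hx⟩ := by
    intro x hx
    rw [hV, ContinuousLinearMap.comp_apply]
    congr 1
    exact Submodule.orthogonalProjectionOnto_mem_subspace_eq_self (⟨x, hx⟩ : N)
  have hVperp : ∀ x ∈ Nᗮ, V x = 0 := by
    intro x hx
    rw [hV, ContinuousLinearMap.comp_apply,
      Submodule.orthogonalProjectionOnto_apply_of_mem_orthogonal hx, map_zero]
  have hMperp : Mᗮ = LinearMap.ker (S : H →ₗ[ℂ] H) := by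
    ext x
    rw [Submodule.mem_orthogonal']
    constructor
    · intro h
      have h1 : (inner ℂ x (oMod S (oMod S x)) : ℂ) = 0 := h _ ⟨oMod S x, rfl⟩
      have h2 : (inner ℂ (oMod S x) (oMod S x) : ℂ) = 0 := by
        rw [← h1, ← ContinuousLinearMap.adjoint_inner_right (oMod S),
          (oMod_isSelfAdjoint S).adjoint_eq]
      have h3 : oMod S x = 0 := inner_self_eq_zero.mp h2
      have h4 : ‖S x‖ = 0 := by rw [← norm_oMod_apply, h3, norm_zero]
      exact LinearMap.mem_ker.mpr (norm_eq_zero.mp h4)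
    · intro h u hu
      obtain ⟨y, hy⟩ := hu
      have hSx : S x = 0 := h
      have hx0 : oMod S x = 0 := by
        have : ‖oMod S x‖ = 0 := by rw [norm_oMod_apply, hSx, norm_zero]
        exact norm_eq_zero.mp this
      rw [← hy]
      calc (inner ℂ x (fL y) : ℂ) = inner ℂ x (oMod S y) := rfl
        _ = inner ℂ (oMod S x) y := by
            rw [← (oMod_isSelfAdjoint S).adjoint_eq,
              ContinuousLinearMap.adjoint_inner_right]
            rw [(oMod_isSelfAdjoint S).adjoint_eq]
        _ = 0 := by rw [hx0, inner_zero_left]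
  have hNperp : Nᗮ = LinearMap.ker (S : H →ₗ[ℂ] H) := by
    rw [← hMperp]
    refine le_antisymm (Submodule.orthogonal_le hMN) ?_
    intro x hx
    rw [Submodule.mem_orthogonal']
    intro u hu
    have hu' : u ∈ closure (M : Set H) := by
      rw [← Submodule.topologicalClosure_coe]
      exact hu
    have hclosed : IsClosed {u : H | (inner ℂ x u : ℂ) = 0} :=
      isClosed_eq (innerSL ℂ x).continuous continuous_const
    have hsub : (M : Set H) ⊆ {u : H | (inner ℂ x u : ℂ) = 0} := fun u hu =>
      (Submodule.mem_orthogonal' M x).mp hx u hu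
    exact closure_minimal hsub hclosed hu'
  have hkerV : LinearMap.ker (V : H →ₗ[ℂ] H) = LinearMap.ker (S : H →ₗ[ℂ] H) := by
    refine le_antisymm ?_ ?_
    · intro x hx
      have hx0 : V x = 0 := hx
      have h1 : V₁ (N.orthogonalProjectionOnto x) = 0 := hx0
      have h2 : ‖((N.orthogonalProjectionOnto x : N) : H)‖ = 0 := by
        rw [← hV₁_norm, h1, norm_zero]
      have h3 : (N.orthogonalProjectionOnto x : N) = 0 := by
        apply Subtype.ext
        simpa using norm_eq_zero.mp h2
      have h4 : x ∈ Nᗮ := Submodule.orthogonalProjectionOnto_eq_zero_iff.mp h3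
      rw [← hNperp]
      exact h4
    · intro x hx
      have : x ∈ Nᗮ := hNperp ▸ hx
      exact LinearMap.mem_ker.mpr (hVperp x this)
  have hpartial : IsPartialIsometry V := by
    intro x hx
    rw [hkerV, ← hNperp, Submodule.orthogonal_orthogonal] at hx
    rw [hVmem x hx, hV₁_norm]
  have hfact : S = V * oMod S := by
    ext x
    have hmem : oMod S x ∈ N := hMN ⟨x, rfl⟩
    have h1 : (V * oMod S) x = V₁ ⟨oMod S x, hmem⟩ := by
      rw [ContinuousLinearMap.mul_apply]
      exact hVmem _ hmem
    have h2 : (⟨oMod S x, hmem⟩ : N) = j ⟨fL x, LinearMap.mem_range_self fL x⟩ :=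
      Subtype.ext rfl
    rw [h1, h2, hV₁_eq, hφ_apply, hφ₀_apply]
  exact ⟨V, hpartial, hkerV, hfact⟩


lemma spectralRadius_ne_top (T : H →L[ℂ] H) : spectralRadius ℂ T ≠ ⊤ := by
  rcases subsingleton_or_nontrivial H with hs | hn
  · haveI : Subsingleton (H →L[ℂ] H) :=
      ⟨fun f g => ContinuousLinearMap.ext fun y => Subsingleton.elim _ _⟩
    have hsp : spectrum ℂ T = ∅ := by
      ext z; simp [spectrum.mem_iff, isUnit_of_subsingleton]
    rw [spectralRadius, hsp]
    simp
  · exact ((spectrum.spectralRadius_le_nnnorm (𝕜 := ℂ) T).trans_lt ENNReal.coe_lt_top).ne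

theorem exists_conj_norm_le (T : H →L[ℂ] H) {c : ℝ}
    (hc : (spectralRadius ℂ T).toReal < c) :
    ∃ X : (H →L[ℂ] H)ˣ, ‖(X : H →L[ℂ] H) * T * (↑X⁻¹ : H →L[ℂ] H)‖ ≤ c := by
  classical
  set ρ : ℝ := (spectralRadius ℂ T).toReal with hρ
  have hρ0 : 0 ≤ ρ := ENNReal.toReal_nonneg
  have hc0 : 0 < c := lt_of_le_of_lt hρ0 hc
  set c' : ℝ := (ρ + c) / 2 with hc'
  have hc'0 : 0 < c' := by positivity
  have hc'c : c' < c := by rw [hc']; linarith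
  have hρc' : ρ < c' := by rw [hc']; linarith
  -- Gelfand formula gives eventual bound ‖T^n‖ ≤ c'^n
  have hlt : spectralRadius ℂ T < ENNReal.ofReal c' := by
    rw [← ENNReal.ofReal_toReal (spectralRadius_ne_top T)]
    exact ENNReal.ofReal_lt_ofReal_iff hc'0 |>.mpr hρc'
  have htend := spectrum.pow_nnnorm_pow_one_div_tendsto_nhds_spectralRadius T
  have hev : ∀ᶠ n : ℕ in atTop,
      ((‖T ^ n‖₊ : ENNReal) ^ (1 / (n : ℝ))) < ENNReal.ofReal c' :=
    htend.eventually_lt_const hlt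
  obtain ⟨N₀, hN₀⟩ := eventually_atTop.mp hev
  set N₁ : ℕ := max N₀ 1 with hN₁
  have hbound : ∀ n ≥ N₁, ‖T ^ n‖ ≤ c' ^ n := by
    intro n hn
    have hn1 : 1 ≤ n := le_trans (le_max_right N₀ 1) hn
    have hn0 : (n : ℝ) ≠ 0 := by positivity
    have h1 : ((‖T ^ n‖₊ : ENNReal) ^ (1 / (n : ℝ))) ^ (n : ℝ)
        ≤ (ENNReal.ofReal c') ^ (n : ℝ) :=
      ENNReal.rpow_le_rpow (hN₀ n (le_trans (le_max_left N₀ 1) hn)).le (by positivity)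
    rw [← ENNReal.rpow_mul, one_div_mul_cancel hn0, ENNReal.rpow_one] at h1
    rw [ENNReal.rpow_natCast] at h1
    rw [← ENNReal.ofReal_pow hc'0.le] at h1
    rw [← ENNReal.ofReal_coe_nnreal, coe_nnnorm] at h1
    exact (ENNReal.ofReal_le_ofReal_iff (by positivity)).mp h1
  set t : ℝ := (c ^ 2)⁻¹ with ht
  have ht0 : 0 < t := by positivity
  set g : ℕ → ℝ := fun n => t ^ n * (‖T ^ n‖ * ‖T ^ n‖) with hg
  have hg0 : ∀ n, 0 ≤ g n := fun n => by positivity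
  set q : ℝ := t * (c' * c') with hq
  have hq0 : 0 ≤ q := by positivity
  have hq1 : q < 1 := by
    rw [hq, ht]
    rw [inv_mul_lt_iff₀ (by positivity)]
    nlinarith
  have hgsum : Summable g := by
    rw [← summable_nat_add_iff N₁]
    have hgeo : Summable (fun n : ℕ => q ^ (n + N₁)) := by
      simpa [pow_add] using (summable_geometric_of_lt_one hq0 hq1).mul_right (q ^ N₁)
    refine hgeo.of_nonneg_of_le (fun n => hg0 _) fun n => ?_
    have hb := hbound (n + N₁) (le_add_self)
    have hTn : (0:ℝ) ≤ ‖T ^ (n + N₁)‖ := norm_nonneg _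
    have hcn : (0:ℝ) ≤ c' ^ (n + N₁) := by positivity
    calc g (n + N₁) = t ^ (n + N₁) * (‖T ^ (n + N₁)‖ * ‖T ^ (n + N₁)‖) := rfl
      _ ≤ t ^ (n + N₁) * (c' ^ (n + N₁) * c' ^ (n + N₁)) := by
          exact mul_le_mul_of_nonneg_left (mul_le_mul hb hb hTn hcn) (pow_nonneg ht0.le _)
      _ = q ^ (n + N₁) := by rw [hq, mul_pow, mul_pow]
  -- the operator series
  set A : ℕ → H →L[ℂ] H := fun n =>
    ((t ^ n : ℝ) : ℂ) • (ContinuousLinearMap.adjoint (T ^ n) * T ^ n) with hA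
  have hAsum : Summable A := by
    refine Summable.of_norm_bounded hgsum fun n => ?_
    rw [hA]
    simp only [norm_smul]
    rw [hg]
    have h1 : ‖((t ^ n : ℝ) : ℂ)‖ = t ^ n := by
      rw [Complex.norm_real, Real.norm_eq_abs, abs_of_nonneg (by positivity)]
    rw [h1]
    have h2 : ‖ContinuousLinearMap.adjoint (T ^ n) * T ^ n‖ = ‖T ^ n‖ * ‖T ^ n‖ := by
      rw [← ContinuousLinearMap.star_eq_adjoint]
      exact CStarRing.norm_star_mul_self
    rw [h2]
  set R : H →L[ℂ] H := ∑' n, A n with hR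
  have hRsum : HasSum A R := hAsum.hasSum
  set F : H → ℝ := fun x => RCLike.re (K := ℂ) (inner ℂ x (R x)) with hF
  have hFsum : ∀ x : H, HasSum (fun n => t ^ n * ‖(T ^ n) x‖ ^ 2) (F x) := by
    intro x
    have happ : HasSum (fun n => (A n) x) (R x) :=
      hRsum.mapL (ContinuousLinearMap.apply ℂ H x)
    have hinner : HasSum (fun n => (inner ℂ x ((A n) x) : ℂ)) (inner ℂ x (R x)) :=
      happ.mapL (innerSL ℂ x)
    have hre : HasSum (fun n => RCLike.re (K := ℂ) (inner ℂ x ((A n) x) : ℂ)) (F x) :=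
      hinner.mapL (RCLike.reCLM (K := ℂ))
    convert hre using 2 with n
    rw [hA]
    simp only [ContinuousLinearMap.smul_apply, inner_smul_right, ContinuousLinearMap.mul_apply]
    rw [ContinuousLinearMap.adjoint_inner_right]
    rw [inner_self_eq_norm_sq_to_K (𝕜 := ℂ)]
    rw [RCLike.re_to_complex]
    rw [Complex.mul_re]
    simp [← Complex.ofReal_pow]
  have hF0 : ∀ x, ‖x‖ ^ 2 ≤ F x := by
    intro x
    have := le_hasSum (hFsum x) 0 fun i _ => by positivity
    simpa using this
  have hFself : ∀ x, F x = RCLike.re (K := ℂ) (inner ℂ (R x) x : ℂ) := by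
    intro x
    have h1 : (inner ℂ (R x) x : ℂ) = starRingEnd ℂ (inner ℂ x (R x) : ℂ) :=
      (inner_conj_symm (R x) x).symm
    show RCLike.re (K := ℂ) (inner ℂ x (R x) : ℂ) = _
    rw [h1, RCLike.conj_re]
  have hsa : IsSelfAdjoint R := by
    have hstar : HasSum (fun n => star (A n)) (star R) := hRsum.star
    have heq : (fun n => star (A n)) = A := by
      funext n
      rw [hA]
      rw [star_smul, star_mul, ContinuousLinearMap.star_eq_adjoint,
        ContinuousLinearMap.star_eq_adjoint, ContinuousLinearMap.adjoint_adjoint]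
      rw [RCLike.star_def, Complex.conj_ofReal]
    rw [heq] at hstar
    exact hstar.unique hRsum
  have hRpos : (0 : H →L[ℂ] H) ≤ R := by
    rw [ContinuousLinearMap.nonneg_iff_isPositive]
    refine ⟨ContinuousLinearMap.isSelfAdjoint_iff_isSymmetric.mp hsa, fun x => ?_⟩
    have h1 : 0 ≤ F x := le_trans (by positivity) (hF0 x)
    rw [hFself] at h1
    exact h1
  have hRunit : IsUnit R := by
    refine ContinuousLinearMap.isUnit_of_forall_le_norm_inner_map R (c := 1) one_pos fun x => ?_
    rw [NNReal.coe_one, mul_one]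
    calc ‖x‖ ^ 2 ≤ F x := hF0 x
      _ = RCLike.re (K := ℂ) (inner ℂ (R x) x : ℂ) := hFself x
      _ ≤ ‖(inner ℂ (R x) x : ℂ)‖ := RCLike.re_le_norm _
  set X : H →L[ℂ] H := CFC.sqrt R with hX
  have hXX : X * X = R := CFC.sqrt_mul_sqrt_self R hRpos
  have hXpos : (0 : H →L[ℂ] H) ≤ X := CFC.sqrt_nonneg _
  have hXsa : IsSelfAdjoint X := hXpos.isSelfAdjoint
  have hXnorm : ∀ x, ‖X x‖ ^ 2 = F x := by
    intro x
    have h1 : (inner ℂ x (R x) : ℂ) = inner ℂ (X x) (X x) := by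
      rw [← ContinuousLinearMap.adjoint_inner_right X x (X x), hXsa.adjoint_eq,
        ← ContinuousLinearMap.mul_apply, hXX]
    have h2 := congrArg (RCLike.re (K := ℂ)) h1
    rw [inner_self_eq_norm_mul_norm (𝕜 := ℂ)] at h2
    show ‖X x‖ ^ 2 = RCLike.re (K := ℂ) (inner ℂ x (R x) : ℂ)
    rw [h2]
    ring
  have hXunit : IsUnit X := by
    obtain ⟨u, hu⟩ := hRunit
    have hcomm : X * R = R * X := by rw [← hXX, mul_assoc]
    have h1 : (↑u⁻¹ : H →L[ℂ] H) * X = X * ↑u⁻¹ := by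
      calc (↑u⁻¹ : H →L[ℂ] H) * X = ↑u⁻¹ * X * ((u : H →L[ℂ] H) * ↑u⁻¹) := by
            rw [Units.mul_inv, mul_one]
        _ = ↑u⁻¹ * (X * R) * ↑u⁻¹ := by rw [hu]; noncomm_ring
        _ = ↑u⁻¹ * (R * X) * ↑u⁻¹ := by rw [hcomm]
        _ = (↑u⁻¹ * (u : H →L[ℂ] H)) * (X * ↑u⁻¹) := by rw [hu]; noncomm_ring
        _ = X * ↑u⁻¹ := by rw [Units.inv_mul, one_mul]
    refine isUnit_iff_exists.mpr ⟨X * ↑u⁻¹, ?_, ?_⟩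
    · rw [← mul_assoc, hXX, ← hu, Units.mul_inv]
    · rw [mul_assoc, h1, ← mul_assoc, hXX, ← hu, Units.mul_inv]
  have hshift : ∀ x : H, t * F (T x) = F x - ‖x‖ ^ 2 := by
    intro x
    have h1 : HasSum (fun n => t ^ (n + 1) * ‖(T ^ (n + 1)) x‖ ^ 2)
        (F x - ∑ i ∈ Finset.range 1, t ^ i * ‖(T ^ i) x‖ ^ 2) :=
      (hasSum_nat_add_iff' 1).mpr (hFsum x)
    have h2 : (fun n => t ^ (n + 1) * ‖(T ^ (n + 1)) x‖ ^ 2)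
        = fun n => t * (t ^ n * ‖(T ^ n) (T x)‖ ^ 2) := by
      funext n
      rw [pow_succ T n, ContinuousLinearMap.mul_apply, pow_succ t n]
      ring
    have h3 : HasSum (fun n => t * (t ^ n * ‖(T ^ n) (T x)‖ ^ 2)) (t * F (T x)) :=
      (hFsum (T x)).mul_left t
    rw [h2] at h1
    have h4 := h3.unique h1
    rw [h4]
    simp
  have hmain : ∀ x : H, ‖X (T x)‖ ≤ c * ‖X x‖ := by
    intro x
    have h1 : ‖X (T x)‖ ^ 2 ≤ c ^ 2 * ‖X x‖ ^ 2 := by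
      have h2 : t * F (T x) ≤ F x := by
        rw [hshift x]
        have := sq_nonneg ‖x‖
        linarith
      have h3 : F (T x) ≤ c ^ 2 * F x := by
        have htc : t * c ^ 2 = 1 := by rw [ht]; field_simp
        calc F (T x) = (t * c ^ 2) * F (T x) := by rw [htc, one_mul]
          _ = c ^ 2 * (t * F (T x)) := by ring
          _ ≤ c ^ 2 * F x := mul_le_mul_of_nonneg_left h2 (by positivity)
      rw [hXnorm, hXnorm]
      exact h3
    nlinarith [norm_nonneg (X (T x)), norm_nonneg (X x), mul_nonneg hc0.le (norm_nonneg (X x))]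
  set Xu : (H →L[ℂ] H)ˣ := hXunit.unit with hXu
  have hXu_coe : (Xu : H →L[ℂ] H) = X := hXunit.unit_spec
  refine ⟨Xu, ?_⟩
  refine ContinuousLinearMap.opNorm_le_bound _ hc0.le fun y => ?_
  have h5 : ((Xu : H →L[ℂ] H) * T * (↑Xu⁻¹ : H →L[ℂ] H)) y
      = X (T ((↑Xu⁻¹ : H →L[ℂ] H) y)) := by
    rw [ContinuousLinearMap.mul_apply, ContinuousLinearMap.mul_apply, hXu_coe]
  have h6 : X ((↑Xu⁻¹ : H →L[ℂ] H) y) = y := by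
    have : (Xu : H →L[ℂ] H) * (↑Xu⁻¹ : H →L[ℂ] H) = 1 := Units.mul_inv Xu
    calc X ((↑Xu⁻¹ : H →L[ℂ] H) y)
        = ((Xu : H →L[ℂ] H) * (↑Xu⁻¹ : H →L[ℂ] H)) y := by
          rw [ContinuousLinearMap.mul_apply, hXu_coe]
      _ = y := by rw [this]; simp
  calc ‖((Xu : H →L[ℂ] H) * T * (↑Xu⁻¹ : H →L[ℂ] H)) y‖
      = ‖X (T ((↑Xu⁻¹ : H →L[ℂ] H) y))‖ := by rw [h5]
    _ ≤ c * ‖X ((↑Xu⁻¹ : H →L[ℂ] H) y)‖ := hmain _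
    _ = c * ‖y‖ := by rw [h6]


/-- `r(T) = inf { w(Δ_λ(X T X⁻¹)) : X invertible }`. -/
theorem spectralRadius_eq_inf_numRadius_aluthge_conj
    (T : H →L[ℂ] H) (l : ℝ) (hl : l ∈ Set.Ioo (0 : ℝ) 1) :
    (spectralRadius ℂ T).toReal =
      sInf {r : ℝ | ∃ X : (H →L[ℂ] H)ˣ, ∃ V : H →L[ℂ] H,
        IsPolarDecomp ((X : H →L[ℂ] H) * T * (↑X⁻¹ : H →L[ℂ] H)) V ∧
        r = numRadius (aluthge l ((X : H →L[ℂ] H) * T * (↑X⁻¹ : H →L[ℂ] H)) V)} := by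
  classical
  set E : Set ℝ := {r : ℝ | ∃ X : (H →L[ℂ] H)ˣ, ∃ V : H →L[ℂ] H,
        IsPolarDecomp ((X : H →L[ℂ] H) * T * (↑X⁻¹ : H →L[ℂ] H)) V ∧
        r = numRadius (aluthge l ((X : H →L[ℂ] H) * T * (↑X⁻¹ : H →L[ℂ] H)) V)} with hE
  have hlow : ∀ r ∈ E, (spectralRadius ℂ T).toReal ≤ r := by
    rintro r ⟨X, V, hPD, rfl⟩
    have h1 : spectralRadius ℂ T
        = spectralRadius ℂ (aluthge l ((X : H →L[ℂ] H) * T * (↑X⁻¹ : H →L[ℂ] H)) V) := by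
      rw [spectralRadius_aluthge hPD hl]
      rw [spectralRadius, spectralRadius, spectrum_conj]
    rw [h1]
    exact toReal_spectralRadius_le_numRadius _
  have hne : E.Nonempty := by
    obtain ⟨V, hV⟩ := exists_polarDecomp
      (((1 : (H →L[ℂ] H)ˣ) : H →L[ℂ] H) * T * (↑(1 : (H →L[ℂ] H)ˣ)⁻¹ : H →L[ℂ] H))
    exact ⟨_, 1, V, hV, rfl⟩
  have hbdd : BddBelow E := ⟨(spectralRadius ℂ T).toReal, fun r hr => hlow r hr⟩
  refine le_antisymm (le_csInf hne hlow) ?_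
  refine le_of_forall_pos_le_add fun ε hε => ?_
  obtain ⟨X, hX⟩ := exists_conj_norm_le T
    (lt_add_of_pos_right (spectralRadius ℂ T).toReal hε)
  obtain ⟨V, hV⟩ := exists_polarDecomp ((X : H →L[ℂ] H) * T * (↑X⁻¹ : H →L[ℂ] H))
  have hmem : numRadius (aluthge l ((X : H →L[ℂ] H) * T * (↑X⁻¹ : H →L[ℂ] H)) V) ∈ E :=
    ⟨X, V, hV, rfl⟩
  calc sInf E ≤ numRadius (aluthge l ((X : H →L[ℂ] H) * T * (↑X⁻¹ : H →L[ℂ] H)) V) :=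
        csInf_le hbdd hmem
    _ ≤ ‖(X : H →L[ℂ] H) * T * (↑X⁻¹ : H →L[ℂ] H)‖ := numRadius_aluthge_le_norm hV hl
    _ ≤ (spectralRadius ℂ T).toReal + ε := hX
end

section
/- Let H be a complex Hilbert space and T a bounded linear operator on H. Then the spectral radius of T satisfies r(T) = inf { ‖X T X⁻¹‖ : X a bounded invertible operator on H } = inf { ‖e^A T e^{-A}‖ : A a bounded self-adjoint operator on H }. -/
open ContinuousLinearMap Filter

variable {H : Type*} [NormedAddCommGroup H] [InnerProductSpace ℂ H] [CompleteSpace H]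

set_option synthInstance.maxHeartbeats 1000000
set_option maxHeartbeats 2000000
open scoped Pointwise


lemma aux_lb [Nontrivial H] (T : H →L[ℂ] H) (X : (H →L[ℂ] H)ˣ) :
    (spectralRadius ℂ T).toReal ≤ ‖(X : H →L[ℂ] H) * T * (↑X⁻¹ : H →L[ℂ] H)‖ := by
  have h1 : spectralRadius ℂ T
      = spectralRadius ℂ ((X : H →L[ℂ] H) * T * (↑X⁻¹ : H →L[ℂ] H)) := by
    unfold spectralRadius
    rw [spectrum.units_conjugate]
  have h2 := spectrum.spectralRadius_le_nnnorm (𝕜 := ℂ)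
    ((X : H →L[ℂ] H) * T * (↑X⁻¹ : H →L[ℂ] H))
  rw [← h1] at h2
  calc (spectralRadius ℂ T).toReal
      ≤ ((‖(X : H →L[ℂ] H) * T * (↑X⁻¹ : H →L[ℂ] H)‖₊ : ENNReal)).toReal :=
        ENNReal.toReal_mono ENNReal.coe_ne_top h2
    _ = _ := by simp

lemma aux_key [Nontrivial H] (T : H →L[ℂ] H) {ε : ℝ} (hε : 0 < ε) :
    ∃ X : (H →L[ℂ] H)ˣ, IsSelfAdjoint (X : H →L[ℂ] H) ∧
      (∀ t ∈ spectrum ℝ (X : H →L[ℂ] H), (1:ℝ) ≤ t) ∧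
      ‖(X : H →L[ℂ] H) * T * (↑X⁻¹ : H →L[ℂ] H)‖ ≤ (spectralRadius ℂ T).toReal + ε := by
  set r : ℝ := (spectralRadius ℂ T).toReal with hr
  have hr0 : 0 ≤ r := ENNReal.toReal_nonneg
  set s : ℝ := r + ε with hs_def
  have hs : 0 < s := by positivity
  set c : ℝ := r + ε / 2 with hc_def
  have hc : 0 < c := by positivity
  have hcs : c < s := by rw [hc_def, hs_def]; linarith
  set q : ℝ := c / s with hq_def
  have hq0 : 0 ≤ q := div_nonneg hc.le hs.le
  have hq1 : q < 1 := (div_lt_one hs).mpr hcs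
  set S : H →L[ℂ] H := s⁻¹ • T with hS_def
  have hTS : T = s • S := by rw [hS_def, smul_inv_smul₀ hs.ne']
  -- eventual geometric bound on ‖S ^ n‖
  have hne : spectralRadius ℂ T ≠ ⊤ :=
    (lt_of_le_of_lt (spectrum.spectralRadius_le_nnnorm T) ENNReal.coe_lt_top).ne
  have hrc : spectralRadius ℂ T < ENNReal.ofReal c :=
    (ENNReal.lt_ofReal_iff_toReal_lt hne).mpr (by rw [← hr]; rw [hc_def]; linarith)
  have hev1 := (spectrum.pow_norm_pow_one_div_tendsto_nhds_spectralRadius T).eventually_lt_const hrc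
  have hev : ∀ᶠ n in atTop, ‖S ^ n‖ ≤ q ^ n := by
    filter_upwards [hev1, Filter.eventually_ge_atTop 1] with n h1 hn1
    have hn0 : n ≠ 0 := by omega
    rw [ENNReal.ofReal_lt_ofReal_iff hc] at h1
    have h3 : ‖T ^ n‖ ≤ c ^ n := by
      have h4 : (‖T ^ n‖ ^ (1 / (n:ℝ))) ^ n ≤ c ^ n :=
        pow_le_pow_left₀ (Real.rpow_nonneg (norm_nonneg _) _) h1.le n
      rwa [one_div, Real.rpow_inv_natCast_pow (norm_nonneg _) hn0] at h4
    have h6 : ‖S ^ n‖ = (s⁻¹) ^ n * ‖T ^ n‖ := by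
      rw [hS_def, smul_pow, norm_smul, Real.norm_eq_abs, abs_pow,
        abs_of_nonneg (inv_nonneg.mpr hs.le)]
    calc ‖S ^ n‖ = (s⁻¹) ^ n * ‖T ^ n‖ := h6
      _ ≤ (s⁻¹) ^ n * c ^ n := by
          exact mul_le_mul_of_nonneg_left h3 (by positivity)
      _ = q ^ n := by
          rw [hq_def, div_pow, div_eq_mul_inv, inv_pow, mul_comm]
  -- summability
  have hsum2 : Summable (fun n => ‖S ^ n‖ * ‖S ^ n‖) := by
    refine summable_of_isBigO_nat
      (summable_geometric_of_lt_one (r := q * q) (mul_nonneg hq0 hq0) (by nlinarith)) ?_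
    refine Filter.Eventually.isBigO ?_
    filter_upwards [hev] with n h
    rw [Real.norm_eq_abs, abs_of_nonneg (by positivity), mul_pow]
    exact mul_le_mul h h (norm_nonneg _) (by positivity)
  have hA : Summable (fun n => star (S ^ n) * S ^ n) := by
    refine Summable.of_norm ?_
    simpa only [CStarRing.norm_star_mul_self] using hsum2
  set Y : H →L[ℂ] H := ∑' n, star (S ^ n) * S ^ n with hY_def
  have hY0 : (0 : H →L[ℂ] H) ≤ Y := tsum_nonneg fun n => star_mul_self_nonneg _
  have hYsa : IsSelfAdjoint Y := .of_nonneg hY0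
  -- quadratic form of Y
  have hgz : ∀ z : H, Summable (fun n => ‖(S ^ n) z‖ ^ 2) := by
    intro z
    refine Summable.of_nonneg_of_le (fun n => by positivity)
      (fun n => ?_) (hsum2.mul_right (‖z‖ ^ 2))
    have := (S ^ n).le_opNorm z
    calc ‖(S ^ n) z‖ ^ 2 ≤ (‖S ^ n‖ * ‖z‖) ^ 2 := by
          exact pow_le_pow_left₀ (norm_nonneg _) this 2
      _ = ‖S ^ n‖ * ‖S ^ n‖ * ‖z‖ ^ 2 := by ring
  have hquad : ∀ z : H, (inner ℂ z (Y z) : ℂ) = ((∑' n, ‖(S ^ n) z‖ ^ 2 : ℝ) : ℂ) := by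
    intro z
    have h1 : (inner ℂ z (Y z) : ℂ) = ∑' n, (inner ℂ z ((star (S ^ n) * S ^ n) z) : ℂ) := by
      exact ((innerSL ℂ z).comp (ContinuousLinearMap.apply ℂ H z)).map_tsum hA
    rw [h1]
    have h2 : ∀ n : ℕ, (inner ℂ z ((star (S ^ n) * S ^ n) z) : ℂ) = ((‖(S ^ n) z‖ ^ 2 : ℝ) : ℂ) := by
      intro n
      rw [mul_apply_eq_comp, star_eq_adjoint, adjoint_inner_right, inner_self_eq_norm_sq_to_K]
      norm_cast
    simp_rw [h2]
    exact (Complex.ofRealCLM.map_tsum (hgz z)).symm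
  -- spectrum of Y is contained in [1, ∞)
  have hY1 : ∀ t ∈ spectrum ℝ Y, (1:ℝ) ≤ t := by
    have htail : Y - 1 = ∑' n, star (S ^ (n + 1)) * S ^ (n + 1) := by
      have h0 := hA.tsum_eq_zero_add
      rw [hY_def, h0]
      simp [pow_zero]
    have hsub0 : (0 : H →L[ℂ] H) ≤ Y - 1 := by
      rw [htail]; exact tsum_nonneg fun n => star_mul_self_nonneg _
    have hspecsub := (StarOrderedRing.nonneg_iff_spectrum_nonneg (R := ℝ) (Y - 1)
      (.of_nonneg hsub0)).mp hsub0
    intro t ht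
    have hYeq : spectrum ℝ Y = spectrum ℝ (Y - 1) + ({(1:ℝ)} : Set ℝ) := by
      rw [spectrum.add_singleton_eq, map_one, sub_add_cancel]
    rw [hYeq] at ht
    obtain ⟨a, ha, b, hb, rfl⟩ := Set.mem_add.mp ht
    rw [Set.mem_singleton_iff] at hb
    subst hb
    linarith [hspecsub a ha]
  -- the positive square root X of Y
  set X : H →L[ℂ] H := cfc Real.sqrt Y with hX_def
  have hXsa : IsSelfAdjoint X := cfc_predicate _ Y
  have hXspec : ∀ t ∈ spectrum ℝ X, (1:ℝ) ≤ t := by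
    intro t ht
    rw [hX_def, cfc_map_spectrum Real.sqrt Y hYsa Real.continuous_sqrt.continuousOn] at ht
    obtain ⟨y, hy, rfl⟩ := ht
    exact Real.one_le_sqrt.mpr (hY1 y hy)
  have hXX : X * X = Y := by
    rw [hX_def, ← cfc_mul Real.sqrt Real.sqrt Y
      Real.continuous_sqrt.continuousOn Real.continuous_sqrt.continuousOn]
    calc cfc (fun x : ℝ => Real.sqrt x * Real.sqrt x) Y
        = cfc (id : ℝ → ℝ) Y :=
          cfc_congr fun x hx => Real.mul_self_sqrt (by linarith [hY1 x hx])
      _ = Y := cfc_id ℝ Y hYsa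
  have hXunit : IsUnit X := by
    refine spectrum.isUnit_of_zero_notMem (R := ℝ) fun h0 => ?_
    linarith [hXspec 0 h0]
  -- norm identity for X
  have hXnorm : ∀ z : H, ‖X z‖ ^ 2 = ∑' n, ‖(S ^ n) z‖ ^ 2 := by
    intro z
    have hadj : ContinuousLinearMap.adjoint X = X := (star_eq_adjoint X) ▸ hXsa.star_eq
    have h1 : (inner ℂ (X z) (X z) : ℂ) = inner ℂ z (Y z) := by
      calc (inner ℂ (X z) (X z) : ℂ)
          = inner ℂ (ContinuousLinearMap.adjoint X z) (X z) := by rw [hadj]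
        _ = inner ℂ z (X (X z)) := adjoint_inner_left X (X z) z
        _ = inner ℂ z (Y z) := by rw [← mul_apply_eq_comp, hXX]
    have h2 : ((‖X z‖ ^ 2 : ℝ) : ℂ) = ((∑' n, ‖(S ^ n) z‖ ^ 2 : ℝ) : ℂ) := by
      rw [← hquad z, ← h1, inner_self_eq_norm_sq_to_K]
      norm_cast
    exact_mod_cast h2
  -- X is a contraction intertwiner for S
  have hcontr : ∀ z : H, ‖X (S z)‖ ≤ ‖X z‖ := by
    intro z
    have h1 : ‖X (S z)‖ ^ 2 = ∑' n, ‖(S ^ (n + 1)) z‖ ^ 2 := by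
      rw [hXnorm (S z)]
      exact tsum_congr fun n => by
        rw [show (S ^ (n + 1)) z = (S ^ n) (S z) from by rw [pow_succ]; rfl]
    have h2 := (hgz z).tsum_eq_zero_add
    have h3 : ‖X (S z)‖ ^ 2 ≤ ‖X z‖ ^ 2 := by
      rw [h1, hXnorm z, h2]
      have : 0 ≤ ‖(S ^ 0) z‖ ^ 2 := by positivity
      linarith
    nlinarith [norm_nonneg (X (S z)), norm_nonneg (X z)]
  -- conclude
  refine ⟨hXunit.unit, by rwa [hXunit.unit_spec], by rw [hXunit.unit_spec]; exact hXspec, ?_⟩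
  rw [hXunit.unit_spec]
  have hXU : X * (↑hXunit.unit⁻¹ : H →L[ℂ] H) = 1 := by
    have := hXunit.unit.mul_inv
    rwa [hXunit.unit_spec] at this
  have hS1 : ‖X * S * (↑hXunit.unit⁻¹ : H →L[ℂ] H)‖ ≤ 1 := by
    refine opNorm_le_bound _ zero_le_one fun z => ?_
    rw [one_mul]
    calc ‖(X * S * (↑hXunit.unit⁻¹ : H →L[ℂ] H)) z‖
        = ‖X (S ((↑hXunit.unit⁻¹ : H →L[ℂ] H) z))‖ := by rw [mul_apply_eq_comp, mul_apply_eq_comp]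
      _ ≤ ‖X ((↑hXunit.unit⁻¹ : H →L[ℂ] H) z)‖ := hcontr _
      _ = ‖(X * (↑hXunit.unit⁻¹ : H →L[ℂ] H)) z‖ := by rw [mul_apply_eq_comp]
      _ = ‖z‖ := by rw [hXU, one_apply_eq_self]
  have hXT : X * T * (↑hXunit.unit⁻¹ : H →L[ℂ] H)
      = s • (X * S * (↑hXunit.unit⁻¹ : H →L[ℂ] H)) := by
    rw [hTS, mul_smul_comm, smul_mul_assoc]
  calc ‖X * T * (↑hXunit.unit⁻¹ : H →L[ℂ] H)‖
      = s * ‖X * S * (↑hXunit.unit⁻¹ : H →L[ℂ] H)‖ := by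
        rw [hXT, norm_smul, Real.norm_eq_abs, abs_of_nonneg hs.le]
    _ ≤ s * 1 := mul_le_mul_of_nonneg_left hS1 hs.le
    _ = r + ε := by rw [mul_one]

/-- `r(T) = inf { ‖X T X⁻¹‖ : X invertible } = inf { ‖e^A T e^{-A}‖ : A self-adjoint }`. -/
theorem spectralRadius_eq_inf_norm_conj (T : H →L[ℂ] H) :
    (spectralRadius ℂ T).toReal =
        sInf {r : ℝ | ∃ X : (H →L[ℂ] H)ˣ,
          r = ‖(X : H →L[ℂ] H) * T * (↑X⁻¹ : H →L[ℂ] H)‖} ∧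
      (spectralRadius ℂ T).toReal =
        sInf {r : ℝ | ∃ A : H →L[ℂ] H, IsSelfAdjoint A ∧
          r = ‖NormedSpace.exp A * T * NormedSpace.exp (-A)‖} := by
  rcases subsingleton_or_nontrivial H with hH | hH
  · have hnorm0 : ∀ N : H →L[ℂ] H, ‖N‖ = 0 := fun N => by
      rw [Subsingleton.elim N 0, norm_zero]
    have hσ : spectrum ℂ T = ∅ := by
      rw [Set.eq_empty_iff_forall_notMem]
      intro z hz
      exact (spectrum.mem_iff.mp hz) (isUnit_of_subsingleton _)
    have hρ : (spectralRadius ℂ T).toReal = 0 := by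
      have : spectralRadius ℂ T = 0 := by
        unfold spectralRadius
        rw [hσ]
        simp
      rw [this]
      simp
    have hInf : ∀ P : Set ℝ, (0:ℝ) ∈ P → (∀ x ∈ P, x = 0) → (0:ℝ) = sInf P := fun P h0 hall =>
      le_antisymm (le_csInf ⟨0, h0⟩ fun x hx => (hall x hx).ge)
        (csInf_le ⟨0, fun x hx => (hall x hx).ge⟩ h0)
    constructor
    · rw [hρ]
      refine hInf _ ⟨1, (hnorm0 _).symm⟩ ?_
      rintro x ⟨X, rfl⟩
      exact hnorm0 _
    · rw [hρ]
      refine hInf _ ⟨0, IsSelfAdjoint.zero _, (hnorm0 _).symm⟩ ?_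
      rintro x ⟨A, _, rfl⟩
      exact hnorm0 _
  · constructor
    · refine le_antisymm ?_ ?_
      · refine le_csInf ⟨_, Set.mem_setOf.mpr ⟨1, rfl⟩⟩ ?_
        rintro b ⟨X, rfl⟩
        exact aux_lb T X
      · refine le_of_forall_pos_le_add fun ε hε => ?_
        obtain ⟨U, _, _, hU⟩ := aux_key T hε
        refine (csInf_le ⟨0, ?_⟩ (Set.mem_setOf.mpr ⟨U, rfl⟩)).trans hU
        rintro b ⟨X, rfl⟩
        exact norm_nonneg _
    · refine le_antisymm ?_ ?_
      · refine le_csInf ⟨_, Set.mem_setOf.mpr ⟨0, .zero _, rfl⟩⟩ ?_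
        rintro b ⟨A, hA, rfl⟩
        have h1 : NormedSpace.exp A * NormedSpace.exp (-A) = 1 := by
          let +nondep : NormedAlgebra ℚ (H →L[ℂ] H) := .restrictScalars ℚ ℂ (H →L[ℂ] H)
          rw [← NormedSpace.exp_add_of_commute ((Commute.refl A).neg_right),
            add_neg_cancel, NormedSpace.exp_zero]
        have h2 : NormedSpace.exp (-A) * NormedSpace.exp A = 1 := by
          let +nondep : NormedAlgebra ℚ (H →L[ℂ] H) := .restrictScalars ℚ ℂ (H →L[ℂ] H)
          rw [← NormedSpace.exp_add_of_commute ((Commute.refl A).neg_left),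
            neg_add_cancel, NormedSpace.exp_zero]
        exact aux_lb T ⟨NormedSpace.exp A, NormedSpace.exp (-A), h1, h2⟩
      · refine le_of_forall_pos_le_add fun ε hε => ?_
        obtain ⟨U, hUsa, hUspec, hU⟩ := aux_key T hε
        set A := CFC.log ((U : H →L[ℂ] H)) with hA_def
        have hAsa : IsSelfAdjoint A := IsSelfAdjoint.log
        have hexp : NormedSpace.exp A = (U : H →L[ℂ] H) := by
          rw [hA_def]
          exact CFC.exp_log _ ((StarOrderedRing.isStrictlyPositive_iff_spectrum_pos (R := ℝ) _ hUsa).mpr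
            (fun x hx => lt_of_lt_of_le one_pos (hUspec x hx)))
        have hexpneg : NormedSpace.exp (-A) = (↑U⁻¹ : H →L[ℂ] H) := by
          refine (Units.inv_eq_of_mul_eq_one_right ?_).symm
          let +nondep : NormedAlgebra ℚ (H →L[ℂ] H) := .restrictScalars ℚ ℂ (H →L[ℂ] H)
          rw [← hexp, ← NormedSpace.exp_add_of_commute ((Commute.refl A).neg_right),
            add_neg_cancel, NormedSpace.exp_zero]
        refine (csInf_le ⟨0, ?_⟩ (Set.mem_setOf.mpr ⟨A, hAsa, by rw [hexp, hexpneg]⟩)).trans hU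
        rintro b ⟨B, _, rfl⟩
        exact norm_nonneg _
end
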